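/- arXiv:2510.00896 — 3 statements merged into one kernel-verified Lean document; each statement's English description precedes it below -/
import Mathlib

section
/- Let (Ω,μ) be a probability space, T : ℤ² → (Ω → Ω) a measure-preserving additive action (each T(v) is measure-preserving and T(v+w) = T(v) ∘ T(w)), and f₀ ∈ L²(μ). Define the stationary random field F(i,j)(ω) = f₀(T(i,j)ω). Let L : ℤ² → ℝ be a kernel supported in {0,…,M−1}² and h₀,…,h_{K−1} ∈ ℝ, with filter h_D(L,u) = Σ_{k=0}^{K−1} h_k (L⊗)^k u. Then for all integers 0 < B₁ ≤ B₂ with B₂ ≤ B₁ + MK, E[ ‖⊓_{B₁}( h_D(L, ⊓_{B₁}F) − h_D(L, ⊓_{B₂}F) )‖² ] ≤ C_K² (B₂² − B₁²) E[f₀²], where C_K = Σ_{k=0}^{K−1} ‖L‖₁^k |h_k|. -/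
open MeasureTheory

/-- 2D convolution of a kernel `L` with a signal `u` on `ℤ²`:
`(L ⊗ u)(n) = ∑_k L(k) u(n - k)`. -/
noncomputable def conv2 (L u : ℤ × ℤ → ℝ) : ℤ × ℤ → ℝ :=
  fun n => ∑' k : ℤ × ℤ, L k * u (n - k)

/-- `k`-fold iterated 2D convolution `(L ⊗)^k u`. -/
noncomputable def convIter (L : ℤ × ℤ → ℝ) : ℕ → (ℤ × ℤ → ℝ) → (ℤ × ℤ → ℝ)
  | 0 => fun u => u
  | k + 1 => fun u => conv2 L (convIter L k u)

/-- The 2D convolutional filter `h_D(L, u) = ∑_{k=0}^{K-1} h_k (L ⊗)^k u`. -/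
noncomputable def filt (L : ℤ × ℤ → ℝ) (h : ℕ → ℝ) (K : ℕ) (u : ℤ × ℤ → ℝ) : ℤ × ℤ → ℝ :=
  fun n => ∑ k ∈ Finset.range K, h k * convIter L k u n

/-- `ℓ¹` norm `‖L‖₁` of a kernel. -/
noncomputable def kernelL1 (L : ℤ × ℤ → ℝ) : ℝ := ∑' k : ℤ × ℤ, |L k|

/-- Squared `ℓ²(ℤ²)` norm. -/
noncomputable def l2normSq (u : ℤ × ℤ → ℝ) : ℝ := ∑' v : ℤ × ℤ, u v ^ 2

/-- `ℓ²(ℤ²)` norm. -/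
noncomputable def l2norm (u : ℤ × ℤ → ℝ) : ℝ := Real.sqrt (l2normSq u)

/-- Window operator `⊓_B`: restriction to the square `{0, …, B-1}²`. -/
def window (B : ℕ) (u : ℤ × ℤ → ℝ) : ℤ × ℤ → ℝ :=
  fun n => if 0 ≤ n.1 ∧ n.1 < (B : ℤ) ∧ 0 ≤ n.2 ∧ n.2 < (B : ℤ) then u n else 0

namespace FTAux

/-- The square `[0,a) × [0,a)` as a finset of `ℤ × ℤ`. -/
noncomputable def Q (a : ℤ) : Finset (ℤ × ℤ) := Finset.Ico 0 a ×ˢ Finset.Ico 0 a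

lemma mem_Q {a : ℤ} {n : ℤ × ℤ} : n ∈ Q a ↔ 0 ≤ n.1 ∧ n.1 < a ∧ 0 ≤ n.2 ∧ n.2 < a := by
  simp [Q, Finset.mem_Ico, and_assoc]

lemma Q_mono {a b : ℤ} (hab : a ≤ b) : Q a ⊆ Q b := by
  intro n hn
  rw [mem_Q] at hn ⊢
  omega

lemma card_Q {a : ℕ} : (Q (a : ℤ)).card = a * a := by
  simp [Q, Finset.card_product, Int.card_Ico]

lemma window_eq (B : ℕ) (u : ℤ × ℤ → ℝ) (n : ℤ × ℤ) :
    window B u n = if n ∈ Q (B : ℤ) then u n else 0 := by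
  rw [window]
  by_cases hn : n ∈ Q (B : ℤ)
  · rw [if_pos hn, if_pos (mem_Q.mp hn)]
  · rw [if_neg hn, if_neg (fun hc => hn (mem_Q.mpr hc))]

variable {L u : ℤ × ℤ → ℝ} {M : ℕ}

lemma conv2_eq_sum (hL : ∀ k ∉ Q (M : ℤ), L k = 0) (u : ℤ × ℤ → ℝ) (n : ℤ × ℤ) :
    conv2 L u n = ∑ k ∈ Q (M : ℤ), L k * u (n - k) := by
  apply tsum_eq_sum
  intro k hk
  rw [hL k hk, zero_mul]

lemma conv2_sub (hL : ∀ k ∉ Q (M : ℤ), L k = 0) (u v : ℤ × ℤ → ℝ) (n : ℤ × ℤ) :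
    conv2 L (fun m => u m - v m) n = conv2 L u n - conv2 L v n := by
  rw [conv2_eq_sum hL, conv2_eq_sum hL, conv2_eq_sum hL, ← Finset.sum_sub_distrib]
  exact Finset.sum_congr rfl fun k _ => by ring

lemma convIter_sub (hL : ∀ k ∉ Q (M : ℤ), L k = 0) (u v : ℤ × ℤ → ℝ) :
    ∀ k n, convIter L k (fun m => u m - v m) n = convIter L k u n - convIter L k v n := by
  intro k
  induction k with
  | zero => intro n; rfl
  | succ k ih =>
    intro n
    show conv2 L (convIter L k fun m => u m - v m) n = _
    have heq : (convIter L k fun m => u m - v m)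
        = fun m => convIter L k u m - convIter L k v m := funext fun m => ih m
    rw [heq, conv2_sub hL]
    rfl

lemma filt_sub (hL : ∀ k ∉ Q (M : ℤ), L k = 0) (h : ℕ → ℝ) (K : ℕ) (u v : ℤ × ℤ → ℝ)
    (n : ℤ × ℤ) :
    filt L h K (fun m => u m - v m) n = filt L h K u n - filt L h K v n := by
  simp only [filt, convIter_sub hL, ← Finset.sum_sub_distrib]
  exact Finset.sum_congr rfl fun k _ => by ring

lemma sum_sq_le_of_supp {u : ℤ × ℤ → ℝ} {t : Finset (ℤ × ℤ)} (hu : ∀ n ∉ t, u n = 0)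
    (s : Finset (ℤ × ℤ)) : ∑ n ∈ s, u n ^ 2 ≤ ∑ n ∈ t, u n ^ 2 := by
  have h1 : ∑ n ∈ s ∩ t, u n ^ 2 = ∑ n ∈ s, u n ^ 2 := by
    apply Finset.sum_subset Finset.inter_subset_left
    intro x hx hx'
    have : x ∉ t := fun ht => hx' (Finset.mem_inter.2 ⟨hx, ht⟩)
    rw [hu x this]; ring
  rw [← h1]
  exact Finset.sum_le_sum_of_subset_of_nonneg Finset.inter_subset_right
    (fun n _ _ => sq_nonneg _)

lemma shift_sum {t : Finset (ℤ × ℤ)} (hu : ∀ n ∉ t, u n = 0) (s : Finset (ℤ × ℤ))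
    (k : ℤ × ℤ) : ∑ n ∈ s, u (n - k) ^ 2 ≤ ∑ n ∈ t, u n ^ 2 := by
  have himg : ∑ m ∈ s.image (fun n => n - k), u m ^ 2 = ∑ n ∈ s, u (n - k) ^ 2 :=
    Finset.sum_image (by intro a _ b _ hab; have := congrArg (· + k) hab; simpa using this)
  rw [← himg]
  exact sum_sq_le_of_supp hu _

lemma cs_step (sL : Finset (ℤ × ℤ)) (f : ℤ × ℤ → ℝ) :
    (∑ k ∈ sL, L k * f k) ^ 2 ≤ (∑ k ∈ sL, |L k|) * ∑ k ∈ sL, |L k| * f k ^ 2 := by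
  have habs : |∑ k ∈ sL, L k * f k| ≤ ∑ k ∈ sL, |L k * f k| :=
    Finset.abs_sum_le_sum_abs _ _
  have h1 : (∑ k ∈ sL, L k * f k) ^ 2 ≤ (∑ k ∈ sL, |L k * f k|) ^ 2 := by
    rw [← sq_abs]; exact pow_le_pow_left₀ (abs_nonneg _) habs 2
  refine h1.trans ?_
  have hcs := Finset.sum_mul_sq_le_sq_mul_sq sL (fun k => Real.sqrt |L k|)
    (fun k => Real.sqrt |L k| * |f k|)
  have e1 : (∑ k ∈ sL, Real.sqrt |L k| * (Real.sqrt |L k| * |f k|))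
      = ∑ k ∈ sL, |L k * f k| := by
    refine Finset.sum_congr rfl fun k _ => ?_
    rw [← mul_assoc, Real.mul_self_sqrt (abs_nonneg _), ← abs_mul]
  have e2 : (∑ k ∈ sL, Real.sqrt |L k| ^ 2) = ∑ k ∈ sL, |L k| :=
    Finset.sum_congr rfl fun k _ => Real.sq_sqrt (abs_nonneg _)
  have e3 : (∑ k ∈ sL, (Real.sqrt |L k| * |f k|) ^ 2) = ∑ k ∈ sL, |L k| * f k ^ 2 := by
    refine Finset.sum_congr rfl fun k _ => ?_
    rw [mul_pow, Real.sq_sqrt (abs_nonneg _), sq_abs]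
  rw [e1, e2, e3] at hcs
  exact hcs

lemma young (hL : ∀ k ∉ Q (M : ℤ), L k = 0) {t : Finset (ℤ × ℤ)}
    (hu : ∀ n ∉ t, u n = 0) (s : Finset (ℤ × ℤ)) :
    ∑ n ∈ s, conv2 L u n ^ 2
      ≤ (∑ k ∈ Q (M : ℤ), |L k|) ^ 2 * ∑ n ∈ t, u n ^ 2 := by
  set C := ∑ k ∈ Q (M : ℤ), |L k| with hC
  have hC0 : 0 ≤ C := Finset.sum_nonneg fun _ _ => abs_nonneg _
  have step1 : ∀ n, conv2 L u n ^ 2 ≤ C * ∑ k ∈ Q (M : ℤ), |L k| * u (n - k) ^ 2 := by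
    intro n
    rw [conv2_eq_sum hL]
    exact cs_step (Q (M : ℤ)) (fun k => u (n - k))
  calc ∑ n ∈ s, conv2 L u n ^ 2
      ≤ ∑ n ∈ s, C * ∑ k ∈ Q (M : ℤ), |L k| * u (n - k) ^ 2 :=
        Finset.sum_le_sum fun n _ => step1 n
    _ = C * ∑ k ∈ Q (M : ℤ), |L k| * ∑ n ∈ s, u (n - k) ^ 2 := by
        rw [← Finset.mul_sum, Finset.sum_comm]
        congr 1
        exact Finset.sum_congr rfl fun k _ => by rw [Finset.mul_sum]
    _ ≤ C * ∑ k ∈ Q (M : ℤ), |L k| * ∑ n ∈ t, u n ^ 2 := by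
        refine mul_le_mul_of_nonneg_left (Finset.sum_le_sum fun k _ => ?_) hC0
        exact mul_le_mul_of_nonneg_left (shift_sum hu s k) (abs_nonneg _)
    _ = C ^ 2 * ∑ n ∈ t, u n ^ 2 := by
        rw [← Finset.sum_mul]; ring

lemma convIter_supp (hL : ∀ k ∉ Q (M : ℤ), L k = 0) {b : ℤ}
    (hu : ∀ n ∉ Q b, u n = 0) :
    ∀ k : ℕ, ∀ n ∉ Q (b + M * k), convIter L k u n = 0 := by
  intro k
  induction k with
  | zero => intro n hn; apply hu; simpa using hn
  | succ k ih =>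
    intro n hn
    show conv2 L (convIter L k u) n = 0
    rw [conv2_eq_sum hL]
    apply Finset.sum_eq_zero
    intro j hj
    rcases eq_or_ne (L j) 0 with hz | hz
    · rw [hz, zero_mul]
    · have hj' := mem_Q.mp hj
      have hnot : n - j ∉ Q (b + M * k) := by
        intro hmem
        have hm := mem_Q.mp hmem
        simp only [Prod.fst_sub, Prod.snd_sub] at hm
        apply hn
        rw [mem_Q]
        push_cast at hj' hm ⊢
        have hMk : (M : ℤ) * ((k : ℤ) + 1) = (M : ℤ) * k + M := by ring
        refine ⟨by omega, by omega, by omega, by omega⟩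
      rw [ih _ hnot, mul_zero]

lemma convIter_sq (hL : ∀ k ∉ Q (M : ℤ), L k = 0) {b : ℤ}
    (hu : ∀ n ∉ Q b, u n = 0) :
    ∀ (k : ℕ) (s : Finset (ℤ × ℤ)),
      ∑ n ∈ s, convIter L k u n ^ 2
        ≤ ((∑ j ∈ Q (M : ℤ), |L j|) ^ k) ^ 2 * ∑ n ∈ Q b, u n ^ 2 := by
  intro k
  induction k with
  | zero =>
    intro s
    show ∑ n ∈ s, u n ^ 2 ≤ ((∑ j ∈ Q (M : ℤ), |L j|) ^ 0) ^ 2 * ∑ n ∈ Q b, u n ^ 2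
    rw [pow_zero, one_pow, one_mul]
    exact sum_sq_le_of_supp hu s
  | succ k ih =>
    intro s
    have hsupp := convIter_supp hL hu k
    have hy := young hL (u := convIter L k u) (t := Q (b + M * k)) hsupp s
    have hih := ih (Q (b + M * k))
    set C := ∑ j ∈ Q (M : ℤ), |L j| with hC
    have hC0 : 0 ≤ C := Finset.sum_nonneg fun _ _ => abs_nonneg _
    calc ∑ n ∈ s, convIter L (k + 1) u n ^ 2
        ≤ C ^ 2 * ∑ n ∈ Q (b + M * k), convIter L k u n ^ 2 := hy
      _ ≤ C ^ 2 * ((C ^ k) ^ 2 * ∑ n ∈ Q b, u n ^ 2) :=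
          mul_le_mul_of_nonneg_left hih (sq_nonneg _)
      _ = (C ^ (k + 1)) ^ 2 * ∑ n ∈ Q b, u n ^ 2 := by ring

lemma filt_sq_bound (hL : ∀ k ∉ Q (M : ℤ), L k = 0) {b : ℤ}
    (hu : ∀ n ∉ Q b, u n = 0) (h : ℕ → ℝ) (K : ℕ) (s : Finset (ℤ × ℤ)) :
    ∑ n ∈ s, filt L h K u n ^ 2
      ≤ (∑ k ∈ Finset.range K, (∑ j ∈ Q (M : ℤ), |L j|) ^ k * |h k|) ^ 2
        * ∑ n ∈ Q b, u n ^ 2 := by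
  classical
  have hiter := convIter_sq hL hu
  set C := ∑ j ∈ Q (M : ℤ), |L j| with hC
  have hC0 : 0 ≤ C := Finset.sum_nonneg fun _ _ => abs_nonneg _
  set T := ∑ n ∈ Q b, u n ^ 2 with hT
  have hT0 : 0 ≤ T := Finset.sum_nonneg fun _ _ => sq_nonneg _
  set v : ℕ → EuclideanSpace ℝ s := fun k => (WithLp.equiv 2 _).symm
    (fun i : s => convIter L k u i) with hv
  have happly : ∀ (t : Finset ℕ) (i : s),
      (∑ k ∈ t, h k • v k) i = ∑ k ∈ t, h k * v k i := by
    intro t i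
    induction t using Finset.cons_induction with
    | empty => rfl
    | cons a t ha ih => rw [Finset.sum_cons, Finset.sum_cons, ← ih]; rfl
  have hsum_eq : ∀ w : ℤ × ℤ → ℝ,
      (∑ i : s, w i ^ 2) = ∑ n ∈ s, w n ^ 2 := fun w =>
    Finset.sum_coe_sort s (fun n => w n ^ 2)
  have hnorm_eq : ∀ w : ℤ × ℤ → ℝ,
      ‖((WithLp.equiv 2 _).symm (fun i : s => w i) : EuclideanSpace ℝ s)‖
        = Real.sqrt (∑ n ∈ s, w n ^ 2) := by
    intro w
    have he : (∑ i : s, ‖((WithLp.equiv 2 _).symm (fun i : s => w i) :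
        EuclideanSpace ℝ s) i‖ ^ 2) = ∑ n ∈ s, w n ^ 2 := by
      rw [← hsum_eq w]
      exact Finset.sum_congr rfl fun i _ => by
        rw [Real.norm_eq_abs, sq_abs]; rfl
    rw [EuclideanSpace.norm_eq, he]
  have hvnorm : ∀ k, ‖v k‖ ≤ C ^ k * Real.sqrt T := by
    intro k
    rw [hv, hnorm_eq]
    calc Real.sqrt (∑ n ∈ s, convIter L k u n ^ 2)
        ≤ Real.sqrt ((C ^ k) ^ 2 * T) := Real.sqrt_le_sqrt (hiter k s)
      _ = C ^ k * Real.sqrt T := by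
          rw [Real.sqrt_mul (sq_nonneg _), Real.sqrt_sq (pow_nonneg hC0 k)]
  have hfv : ((WithLp.equiv 2 _).symm (fun i : s => filt L h K u i) : EuclideanSpace ℝ s)
      = ∑ k ∈ Finset.range K, h k • v k := by
    apply PiLp.ext
    intro i
    rw [happly]
    simp only [filt, hv]
    rfl
  have hnorm_le : ‖((WithLp.equiv 2 _).symm (fun i : s => filt L h K u i) :
      EuclideanSpace ℝ s)‖ ≤ (∑ k ∈ Finset.range K, C ^ k * |h k|) * Real.sqrt T := by
    rw [hfv]
    calc ‖∑ k ∈ Finset.range K, h k • v k‖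
        ≤ ∑ k ∈ Finset.range K, ‖h k • v k‖ := norm_sum_le _ _
      _ = ∑ k ∈ Finset.range K, |h k| * ‖v k‖ :=
          Finset.sum_congr rfl fun k _ => by rw [norm_smul, Real.norm_eq_abs]
      _ ≤ ∑ k ∈ Finset.range K, |h k| * (C ^ k * Real.sqrt T) :=
          Finset.sum_le_sum fun k _ =>
            mul_le_mul_of_nonneg_left (hvnorm k) (abs_nonneg _)
      _ = (∑ k ∈ Finset.range K, C ^ k * |h k|) * Real.sqrt T := by
          rw [Finset.sum_mul]
          exact Finset.sum_congr rfl fun k _ => by ring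
  have hfin : ∑ n ∈ s, filt L h K u n ^ 2
      = ‖((WithLp.equiv 2 _).symm (fun i : s => filt L h K u i) :
          EuclideanSpace ℝ s)‖ ^ 2 := by
    rw [hnorm_eq, Real.sq_sqrt (Finset.sum_nonneg fun _ _ => sq_nonneg _)]
  rw [hfin]
  calc ‖((WithLp.equiv 2 _).symm (fun i : s => filt L h K u i) :
          EuclideanSpace ℝ s)‖ ^ 2
      ≤ ((∑ k ∈ Finset.range K, C ^ k * |h k|) * Real.sqrt T) ^ 2 :=
        pow_le_pow_left₀ (norm_nonneg _) hnorm_le 2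
    _ = (∑ k ∈ Finset.range K, C ^ k * |h k|) ^ 2 * T := by
        rw [mul_pow, Real.sq_sqrt hT0]

end FTAux

/-- **Proposition 1: transferability of filters between grid graphs.**
For the stationary field `F(i,j)(ω) = f₀(T(i,j)ω)`, a kernel supported in `{0,…,M-1}²`,
and integers `0 < B₁ ≤ B₂ ≤ B₁ + M K`,
`E[‖⊓_{B₁}(h_D(L, ⊓_{B₁}F) - h_D(L, ⊓_{B₂}F))‖²] ≤ C_K² (B₂² - B₁²) E[f₀²]`,
where `C_K = ∑_{k=0}^{K-1} ‖L‖₁ᵏ |h_k|`. -/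
theorem filter_transfer_grid {Ω : Type*} [MeasurableSpace Ω]
    (μ : Measure Ω) [IsProbabilityMeasure μ]
    (T : ℤ × ℤ → Ω → Ω) (hT : ∀ v, MeasurePreserving (T v) μ μ)
    (hTadd : ∀ v w, T (v + w) = T v ∘ T w)
    (f₀ : Ω → ℝ) (hf₀ : MemLp f₀ 2 μ)
    (L : ℤ × ℤ → ℝ) (M : ℕ)
    (hL : ∀ k : ℤ × ℤ, L k ≠ 0 → 0 ≤ k.1 ∧ k.1 < (M : ℤ) ∧ 0 ≤ k.2 ∧ k.2 < (M : ℤ))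
    (K : ℕ) (h : ℕ → ℝ)
    (B₁ B₂ : ℕ) (hB₁ : 0 < B₁) (hB : B₁ ≤ B₂) (hBMK : B₂ ≤ B₁ + M * K) :
    ∫ ω, l2normSq (window B₁ (fun n =>
          filt L h K (window B₁ (fun w => f₀ (T w ω))) n
            - filt L h K (window B₂ (fun w => f₀ (T w ω))) n)) ∂μ
      ≤ (∑ k ∈ Finset.range K, kernelL1 L ^ k * |h k|) ^ 2
        * ((B₂ : ℝ) ^ 2 - (B₁ : ℝ) ^ 2) * ∫ ω, f₀ ω ^ 2 ∂μ := by
  classical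
  open FTAux in
  have hL' : ∀ k ∉ FTAux.Q (M : ℤ), L k = 0 := by
    intro k hk
    by_contra hne
    exact hk (FTAux.mem_Q.mpr (hL k hne))
  set C := ∑ j ∈ FTAux.Q (M : ℤ), |L j| with hCdef
  have hkernel : kernelL1 L = C :=
    tsum_eq_sum (fun k hk => by rw [hL' k hk, abs_zero])
  have hCK_eq : (∑ k ∈ Finset.range K, kernelL1 L ^ k * |h k|)
      = ∑ k ∈ Finset.range K, C ^ k * |h k| :=
    Finset.sum_congr rfl fun k _ => by rw [hkernel]
  set CK := ∑ k ∈ Finset.range K, C ^ k * |h k| with hCKdef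
  set A := FTAux.Q (B₂ : ℤ) \ FTAux.Q (B₁ : ℤ) with hAdef
  set s : Finset (ℤ × ℤ) := FTAux.Q ((B₂ : ℤ) + M * K) with hsdef
  have hB12 : (B₁ : ℤ) ≤ (B₂ : ℤ) := by exact_mod_cast hB
  have hB2s : (B₂ : ℤ) ≤ (B₂ : ℤ) + M * K :=
    le_add_of_nonneg_right (mul_nonneg (Int.natCast_nonneg M) (Int.natCast_nonneg K))
  have hB1s : (B₁ : ℤ) ≤ (B₂ : ℤ) + M * K := hB12.trans hB2s
  -- pointwise key estimate
  have key : ∀ ω, l2normSq (window B₁ (fun n =>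
        filt L h K (window B₁ (fun w => f₀ (T w ω))) n
          - filt L h K (window B₂ (fun w => f₀ (T w ω))) n))
      ≤ CK ^ 2 * ∑ n ∈ A, f₀ (T n ω) ^ 2 := by
    intro ω
    set F : ℤ × ℤ → ℝ := fun w => f₀ (T w ω) with hF
    set g : ℤ × ℤ → ℝ := fun m => window B₁ F m - window B₂ F m with hg
    have hgsupp : ∀ n ∉ FTAux.Q (B₂ : ℤ), g n = 0 := by
      intro n hn
      have hn1 : n ∉ FTAux.Q (B₁ : ℤ) := fun hc => hn (FTAux.Q_mono hB12 hc)
      rw [hg]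
      simp only
      rw [FTAux.window_eq, FTAux.window_eq, if_neg hn1, if_neg hn, sub_zero]
    have hfun : (fun n =>
        filt L h K (window B₁ F) n - filt L h K (window B₂ F) n)
          = fun n => filt L h K g n :=
      funext fun n => (FTAux.filt_sub hL' h K (window B₁ F) (window B₂ F) n).symm
    rw [hfun]
    have htsum : l2normSq (window B₁ (fun n => filt L h K g n))
        = ∑ n ∈ s, (window B₁ (fun n => filt L h K g n) n) ^ 2 := by
      apply tsum_eq_sum
      intro n hn
      have hn1 : n ∉ FTAux.Q (B₁ : ℤ) := fun hc => hn (FTAux.Q_mono hB1s hc)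
      rw [FTAux.window_eq, if_neg hn1]
      norm_num
    rw [htsum]
    have hmono : ∑ n ∈ s, (window B₁ (fun n => filt L h K g n) n) ^ 2
        ≤ ∑ n ∈ s, (filt L h K g n) ^ 2 := by
      refine Finset.sum_le_sum fun n _ => ?_
      rw [FTAux.window_eq]
      split_ifs
      · exact le_rfl
      · simpa using sq_nonneg (filt L h K g n)
    have hfb := FTAux.filt_sq_bound hL' hgsupp h K s
    have hA1 : ∑ n ∈ A, g n ^ 2 = ∑ n ∈ FTAux.Q (B₂ : ℤ), g n ^ 2 := by
      apply Finset.sum_subset Finset.sdiff_subset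
      intro n hn hn'
      have hn1 : n ∈ FTAux.Q (B₁ : ℤ) := by
        by_contra hc
        exact hn' (Finset.mem_sdiff.mpr ⟨hn, hc⟩)
      have : g n = 0 := by
        rw [hg]
        simp only
        rw [FTAux.window_eq, FTAux.window_eq, if_pos hn1, if_pos (FTAux.Q_mono hB12 hn1),
          sub_self]
      rw [this]
      norm_num
    have hA2 : ∑ n ∈ A, g n ^ 2 = ∑ n ∈ A, f₀ (T n ω) ^ 2 := by
      refine Finset.sum_congr rfl fun n hn => ?_
      obtain ⟨hn2, hn1⟩ := Finset.mem_sdiff.mp hn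
      have : g n = 0 - F n := by
        rw [hg]
        simp only
        rw [FTAux.window_eq, FTAux.window_eq, if_neg hn1, if_pos hn2]
      rw [this]
      ring
    calc ∑ n ∈ s, (window B₁ (fun n => filt L h K g n) n) ^ 2
        ≤ ∑ n ∈ s, (filt L h K g n) ^ 2 := hmono
      _ ≤ CK ^ 2 * ∑ n ∈ FTAux.Q (B₂ : ℤ), g n ^ 2 := hfb
      _ = CK ^ 2 * ∑ n ∈ A, f₀ (T n ω) ^ 2 := by rw [← hA1, hA2]
  -- integrability and integral identities
  have hsqInt : Integrable (fun x => f₀ x ^ 2) μ := hf₀.integrable_sq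
  have hint : ∀ n : ℤ × ℤ, Integrable (fun ω => f₀ (T n ω) ^ 2) μ := fun n =>
    ((hT n).integrable_comp hsqInt.aestronglyMeasurable).mpr hsqInt
  have hIeq : ∀ n : ℤ × ℤ, ∫ ω, f₀ (T n ω) ^ 2 ∂μ = ∫ ω, f₀ ω ^ 2 ∂μ := by
    intro n
    have hmeas : AEStronglyMeasurable (fun x => f₀ x ^ 2) (Measure.map (T n) μ) := by
      rw [(hT n).map_eq]
      exact hsqInt.aestronglyMeasurable
    calc ∫ ω, f₀ (T n ω) ^ 2 ∂μ
        = ∫ x, f₀ x ^ 2 ∂(Measure.map (T n) μ) :=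
          (integral_map (hT n).measurable.aemeasurable hmeas).symm
      _ = ∫ ω, f₀ ω ^ 2 ∂μ := by rw [(hT n).map_eq]
  have hcard : (A.card : ℝ) = (B₂ : ℝ) ^ 2 - (B₁ : ℝ) ^ 2 := by
    have h1 : A.card = B₂ * B₂ - B₁ * B₁ := by
      rw [hAdef, Finset.card_sdiff_of_subset (FTAux.Q_mono hB12), FTAux.card_Q, FTAux.card_Q]
    rw [h1, Nat.cast_sub (Nat.mul_le_mul hB hB)]
    push_cast
    ring
  calc ∫ ω, l2normSq (window B₁ (fun n =>
          filt L h K (window B₁ (fun w => f₀ (T w ω))) n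
            - filt L h K (window B₂ (fun w => f₀ (T w ω))) n)) ∂μ
      ≤ ∫ ω, CK ^ 2 * ∑ n ∈ A, f₀ (T n ω) ^ 2 ∂μ := by
        apply integral_mono_of_nonneg
        · exact Filter.Eventually.of_forall fun ω => tsum_nonneg fun v => sq_nonneg _
        · exact (integrable_finset_sum A fun n _ => hint n).const_mul _
        · exact Filter.Eventually.of_forall key
    _ = CK ^ 2 * ∑ n ∈ A, ∫ ω, f₀ (T n ω) ^ 2 ∂μ := by
        rw [integral_const_mul, integral_finset_sum A fun n _ => hint n]
    _ = CK ^ 2 * ((A.card : ℝ) * ∫ ω, f₀ ω ^ 2 ∂μ) := by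
        rw [Finset.sum_congr rfl fun n _ => hIeq n, Finset.sum_const, nsmul_eq_mul]
    _ = (∑ k ∈ Finset.range K, kernelL1 L ^ k * |h k|) ^ 2
        * ((B₂ : ℝ) ^ 2 - (B₁ : ℝ) ^ 2) * ∫ ω, f₀ ω ^ 2 ∂μ := by
        rw [hCK_eq, hcard]
        ring
end

section
/- Let L : ℤ² → ℝ be a kernel supported in {0,…,M−1}², h₀,…,h_{K−1} ∈ ℝ, and let f : ℤ² → ℝ be a bounded function. Let B ∈ ℕ⁺ and let ⊓'_{B,K,M} denote the window operator onto the square {−(K−1)M, …, B−1+(K−1)M}². Then ‖ ⊓_B( Σ_{k=0}^{K−1} h_k (L⊗)^k f − Σ_{k=0}^{K−1} h_k (L⊗)^k (⊓_B f) ) ‖ ≤ H_K · ‖ ⊓'_{B,K,M}( f − ⊓_B f ) ‖, where H_K = Σ_{k=0}^{K−1} |h_k| ‖L‖₁^k. -/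
open MeasureTheory

/-- Window operator `⊓'_{B,K,M}`: restriction to the square
`{-(K-1)M, …, B-1+(K-1)M}²`. -/
def window' (B K M : ℕ) (u : ℤ × ℤ → ℝ) : ℤ × ℤ → ℝ :=
  fun n => if -(((K - 1) * M : ℕ) : ℤ) ≤ n.1 ∧ n.1 ≤ (B : ℤ) - 1 + ((K - 1) * M : ℕ)
      ∧ -(((K - 1) * M : ℕ) : ℤ) ≤ n.2 ∧ n.2 ≤ (B : ℤ) - 1 + ((K - 1) * M : ℕ)
    then u n else 0

lemma l2norm_nonneg (u : ℤ × ℤ → ℝ) : 0 ≤ l2norm u := Real.sqrt_nonneg _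

noncomputable def toEuc (T : Finset (ℤ × ℤ)) (u : ℤ × ℤ → ℝ) : EuclideanSpace ℝ T :=
  WithLp.toLp 2 (fun i => u i)

lemma toEuc_sum {ι : Type*} [DecidableEq ι] (T : Finset (ℤ × ℤ)) (s : Finset ι) (c : ι → ℝ)
    (u : ι → ℤ × ℤ → ℝ) :
    toEuc T (fun n => ∑ i ∈ s, c i * u i n) = ∑ i ∈ s, c i • toEuc T (u i) := by
  induction s using Finset.induction_on with
  | empty => ext j; simp [toEuc]
  | @insert a t hni ih =>
      rw [Finset.sum_insert hni, ← ih]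
      ext j
      have h1 : (toEuc T fun n => ∑ i ∈ insert a t, c i * u i n) j
          = ∑ i ∈ insert a t, c i * u i j := rfl
      rw [h1, Finset.sum_insert hni]
      rfl

lemma l2norm_eq_norm (T : Finset (ℤ × ℤ)) (u : ℤ × ℤ → ℝ) (hu : ∀ n ∉ T, u n = 0) :
    l2norm u = ‖toEuc T u‖ := by
  have hu2 : ∀ n ∉ T, u n ^ 2 = 0 := fun n hn => by rw [hu n hn]; ring
  rw [l2norm, l2normSq, tsum_eq_sum hu2, EuclideanSpace.norm_eq]
  congr 1
  rw [← Finset.sum_coe_sort T (fun n => u n ^ 2)]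
  apply Finset.sum_congr rfl
  intro i _
  rw [Real.norm_eq_abs, sq_abs]
  rfl

lemma l2norm_finsum_le {ι : Type*} [DecidableEq ι] (s : Finset ι) (c : ι → ℝ)
    (u : ι → ℤ × ℤ → ℝ) (T : Finset (ℤ × ℤ)) (hu : ∀ i ∈ s, ∀ n ∉ T, u i n = 0) :
    l2norm (fun n => ∑ i ∈ s, c i * u i n) ≤ ∑ i ∈ s, |c i| * l2norm (u i) := by
  have hsupp : ∀ n ∉ T, (∑ i ∈ s, c i * u i n) = 0 := by
    intro n hn
    exact Finset.sum_eq_zero fun i hi => by rw [hu i hi n hn, mul_zero]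
  rw [l2norm_eq_norm T _ hsupp, toEuc_sum]
  refine le_trans (norm_sum_le s _) ?_
  apply Finset.sum_le_sum
  intro i hi
  rw [norm_smul, Real.norm_eq_abs, l2norm_eq_norm T (u i) (hu i hi)]

lemma l2norm_le_of_restrict {u v : ℤ × ℤ → ℝ} (T : Finset (ℤ × ℤ)) (hu : ∀ n ∉ T, u n = 0)
    (hv : ∀ n, v n = u n ∨ v n = 0) : l2norm v ≤ l2norm u := by
  have hvT : ∀ n ∉ T, v n = 0 := by
    intro n hn
    rcases hv n with h | h
    · rw [h, hu n hn]
    · exact h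
  unfold l2norm l2normSq
  rw [tsum_eq_sum (f := fun n => v n ^ 2) (fun n hn => by show v n ^ 2 = 0; rw [hvT n hn]; ring),
    tsum_eq_sum (f := fun n => u n ^ 2) (fun n hn => by show u n ^ 2 = 0; rw [hu n hn]; ring)]
  apply Real.sqrt_le_sqrt
  apply Finset.sum_le_sum
  intro n _
  show v n ^ 2 ≤ u n ^ 2
  rcases hv n with h | h
  · rw [h]
  · rw [h]; simpa using sq_nonneg (u n)

lemma l2norm_shift (u : ℤ × ℤ → ℝ) (s : ℤ × ℤ) :
    l2norm (fun n => u (n - s)) = l2norm u := by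
  unfold l2norm l2normSq
  congr 1
  have := (Equiv.subRight s).tsum_eq (fun v : ℤ × ℤ => u v ^ 2)
  simpa using this

noncomputable def kerBox (M : ℕ) : Finset (ℤ × ℤ) :=
  Finset.Icc ((0 : ℤ), (0 : ℤ)) ((M : ℤ) - 1, (M : ℤ) - 1)

lemma mem_kerBox {M : ℕ} {k : ℤ × ℤ} :
    k ∈ kerBox M ↔ 0 ≤ k.1 ∧ k.1 ≤ (M : ℤ) - 1 ∧ 0 ≤ k.2 ∧ k.2 ≤ (M : ℤ) - 1 := by
  simp only [kerBox, Finset.mem_Icc, Prod.le_def]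
  tauto

variable {L : ℤ × ℤ → ℝ} {M : ℕ}

lemma conv2_eq_sum (hLS : ∀ k, L k ≠ 0 → k ∈ kerBox M) (u : ℤ × ℤ → ℝ) (n : ℤ × ℤ) :
    conv2 L u n = ∑ k ∈ kerBox M, L k * u (n - k) := by
  refine tsum_eq_sum ?_
  intro k hk
  rcases eq_or_ne (L k) 0 with h | h
  · rw [h, zero_mul]
  · exact absurd (hLS k h) hk

lemma kernelL1_eq_sum (hLS : ∀ k, L k ≠ 0 → k ∈ kerBox M) :
    kernelL1 L = ∑ k ∈ kerBox M, |L k| := by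
  refine tsum_eq_sum ?_
  intro k hk
  rcases eq_or_ne (L k) 0 with h | h
  · rw [h, abs_zero]
  · exact absurd (hLS k h) hk

lemma kernelL1_nonneg (hLS : ∀ k, L k ≠ 0 → k ∈ kerBox M) : 0 ≤ kernelL1 L := by
  rw [kernelL1_eq_sum hLS]
  positivity

lemma convIter_sub (hLS : ∀ k, L k ≠ 0 → k ∈ kerBox M) (u v : ℤ × ℤ → ℝ) :
    ∀ (k : ℕ) (n : ℤ × ℤ),
      convIter L k (fun m => u m - v m) n = convIter L k u n - convIter L k v n := by
  intro k
  induction k with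
  | zero => intro n; rfl
  | succ k ih =>
      intro n
      show conv2 L (convIter L k fun m => u m - v m) n
          = conv2 L (convIter L k u) n - conv2 L (convIter L k v) n
      rw [conv2_eq_sum hLS, conv2_eq_sum hLS (convIter L k u),
        conv2_eq_sum hLS (convIter L k v), ← Finset.sum_sub_distrib]
      apply Finset.sum_congr rfl
      intro s _
      rw [ih]
      ring

lemma conv2_support (hLS : ∀ k, L k ≠ 0 → k ∈ kerBox M) (u : ℤ × ℤ → ℝ) (a b : ℤ × ℤ)
    (hu : ∀ n, u n ≠ 0 → a ≤ n ∧ n ≤ b) :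
    ∀ n, conv2 L u n ≠ 0 → a ≤ n ∧ n ≤ b + ((M : ℤ), (M : ℤ)) := by
  intro n hn
  rw [conv2_eq_sum hLS] at hn
  obtain ⟨k, hkS, hk⟩ := Finset.exists_ne_zero_of_sum_ne_zero hn
  have hu0 : u (n - k) ≠ 0 := fun h0 => hk (by rw [h0, mul_zero])
  rw [mem_kerBox] at hkS
  obtain ⟨h1, h2⟩ := hu _ hu0
  rw [Prod.le_def] at h1 h2 ⊢
  rw [Prod.le_def]
  simp only [Prod.fst_sub, Prod.snd_sub, Prod.fst_add, Prod.snd_add] at *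
  constructor
  · constructor <;> omega
  · constructor <;> omega

lemma young (hLS : ∀ k, L k ≠ 0 → k ∈ kerBox M) (u : ℤ × ℤ → ℝ) (a b : ℤ × ℤ)
    (hu : ∀ n, u n ≠ 0 → a ≤ n ∧ n ≤ b) :
    l2norm (conv2 L u) ≤ kernelL1 L * l2norm u := by
  have hrw : conv2 L u = fun n => ∑ s ∈ kerBox M, L s * (fun m => u (m - s)) n :=
    funext fun n => conv2_eq_sum hLS u n
  rw [hrw, kernelL1_eq_sum hLS]
  set T := Finset.Icc a (b + ((M : ℤ), (M : ℤ))) with hT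
  have hsupp : ∀ s ∈ kerBox M, ∀ n ∉ T, (fun m => u (m - s)) n = 0 := by
    intro s hs n hn
    by_contra h0
    apply hn
    rw [hT, Finset.mem_Icc]
    obtain ⟨h1, h2⟩ := hu _ h0
    rw [mem_kerBox] at hs
    rw [Prod.le_def] at h1 h2
    rw [Prod.le_def, Prod.le_def]
    simp only [Prod.fst_sub, Prod.snd_sub, Prod.fst_add, Prod.snd_add] at *
    constructor
    · constructor <;> omega
    · constructor <;> omega
  calc l2norm (fun n => ∑ s ∈ kerBox M, L s * (fun m => u (m - s)) n)
      ≤ ∑ s ∈ kerBox M, |L s| * l2norm (fun m => u (m - s)) :=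
        l2norm_finsum_le (kerBox M) L _ T hsupp
    _ = ∑ s ∈ kerBox M, |L s| * l2norm u := by
        apply Finset.sum_congr rfl
        intro s _
        rw [l2norm_shift]
    _ = (∑ s ∈ kerBox M, |L s|) * l2norm u := (Finset.sum_mul _ _ _).symm

lemma young_iter (hLS : ∀ k, L k ≠ 0 → k ∈ kerBox M) (u : ℤ × ℤ → ℝ) (a b : ℤ × ℤ)
    (hu : ∀ n, u n ≠ 0 → a ≤ n ∧ n ≤ b) : ∀ k : ℕ,
    (∀ n, convIter L k u n ≠ 0 → a ≤ n ∧ n ≤ b + ((k * M : ℤ), (k * M : ℤ))) ∧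
      l2norm (convIter L k u) ≤ kernelL1 L ^ k * l2norm u := by
  intro k
  induction k with
  | zero =>
      constructor
      · intro n hn
        obtain ⟨h1, h2⟩ := hu n hn
        refine ⟨h1, ?_⟩
        rw [Prod.le_def] at h2 ⊢
        simp only [Prod.fst_add, Prod.snd_add]
        constructor <;> omega
      · simp [convIter]
  | succ k ih =>
      obtain ⟨ihs, ihn⟩ := ih
      have hs' := conv2_support hLS (convIter L k u) a (b + ((k * M : ℤ), (k * M : ℤ))) ihs
      constructor
      · intro n hn
        obtain ⟨h1, h2⟩ := hs' n hn
        refine ⟨h1, ?_⟩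
        rw [Prod.le_def] at h2 ⊢
        simp only [Prod.fst_add, Prod.snd_add] at h2 ⊢
        push_cast at h2 ⊢
        constructor <;> linarith [h2.1, h2.2]
      · calc l2norm (convIter L (k + 1) u)
            ≤ kernelL1 L * l2norm (convIter L k u) :=
              young hLS (convIter L k u) a (b + ((k * M : ℤ), (k * M : ℤ))) ihs
          _ ≤ kernelL1 L * (kernelL1 L ^ k * l2norm u) :=
              mul_le_mul_of_nonneg_left ihn (kernelL1_nonneg hLS)
          _ = kernelL1 L ^ (k + 1) * l2norm u := by ring

/-- membership in the window of halfwidth `c` around `[0, B-1]²`. -/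
def inWin (Bz c : ℤ) (n : ℤ × ℤ) : Prop :=
  -c ≤ n.1 ∧ n.1 ≤ Bz - 1 + c ∧ -c ≤ n.2 ∧ n.2 ≤ Bz - 1 + c

lemma convIter_congr (hLS : ∀ k, L k ≠ 0 → k ∈ kerBox M) (Bz : ℤ) (u v : ℤ × ℤ → ℝ) :
    ∀ (k : ℕ) (c : ℤ), (∀ n, inWin Bz (c + k * (M : ℤ)) n → u n = v n) →
      ∀ n, inWin Bz c n → convIter L k u n = convIter L k v n := by
  intro k
  induction k with
  | zero =>
      intro c hagree n hn
      have hc : c + (0 : ℕ) * (M : ℤ) = c := by push_cast; ring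
      rw [hc] at hagree
      exact hagree n hn
  | succ k ih =>
      intro c hagree n hn
      show conv2 L (convIter L k u) n = conv2 L (convIter L k v) n
      rw [conv2_eq_sum hLS, conv2_eq_sum hLS]
      apply Finset.sum_congr rfl
      intro s hs
      rcases eq_or_ne (L s) 0 with h0 | h0
      · rw [h0, zero_mul, zero_mul]
      congr 1
      refine ih (c + M) ?_ (n - s) ?_
      · intro m hm
        apply hagree m
        have hc : c + ((k : ℕ) + 1 : ℕ) * (M : ℤ) = c + (M : ℤ) + k * (M : ℤ) := by
          push_cast; ring
        rw [hc]
        exact hm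
      · rw [mem_kerBox] at hs
        obtain ⟨w1, w2, w3, w4⟩ := hn
        refine ⟨?_, ?_, ?_, ?_⟩ <;>
          simp only [Prod.fst_sub, Prod.snd_sub] <;> omega

/-- **Windowing bound (used in the proof of Theorem 1).**
For a kernel supported in `{0, …, M-1}²` and a bounded signal `f`,
`‖⊓_B (h_D(L, f) - h_D(L, ⊓_B f))‖ ≤ H_K ‖⊓'_{B,K,M} (f - ⊓_B f)‖`, where
`H_K = ∑_{k=0}^{K-1} |h_k| ‖L‖₁ᵏ`. -/
theorem window_truncation_bound (L : ℤ × ℤ → ℝ) (M : ℕ)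
    (hL : ∀ k : ℤ × ℤ, L k ≠ 0 → 0 ≤ k.1 ∧ k.1 < (M : ℤ) ∧ 0 ≤ k.2 ∧ k.2 < (M : ℤ))
    (K : ℕ) (h : ℕ → ℝ) (f : ℤ × ℤ → ℝ) (hf : ∃ Cb : ℝ, ∀ n, |f n| ≤ Cb)
    (B : ℕ) (hB : 0 < B) :
    l2norm (window B (fun n => filt L h K f n - filt L h K (window B f) n))
      ≤ (∑ k ∈ Finset.range K, |h k| * kernelL1 L ^ k)
        * l2norm (window' B K M (fun n => f n - window B f n)) := by
  have hLS : ∀ k, L k ≠ 0 → k ∈ kerBox M := by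
    intro k hk
    rw [mem_kerBox]
    obtain ⟨h1, h2, h3, h4⟩ := hL k hk
    exact ⟨h1, by omega, h3, by omega⟩
  set g : ℤ × ℤ → ℝ := fun n => f n - window B f n with hg
  set g' : ℤ × ℤ → ℝ := window' B K M g with hg'
  set c₀ : ℤ := (((K - 1) * M : ℕ) : ℤ) with hc₀
  -- linearity of the filter
  have step0 : ∀ n, filt L h K f n - filt L h K (window B f) n
      = ∑ k ∈ Finset.range K, h k * convIter L k g n := by
    intro n
    unfold filt
    rw [← Finset.sum_sub_distrib]
    apply Finset.sum_congr rfl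
    intro k _
    rw [show convIter L k g n = convIter L k f n - convIter L k (window B f) n from
      convIter_sub hLS f (window B f) k n]
    ring
  -- g and g' agree on the relevant enlarged windows
  have hgg' : ∀ k, k < K → ∀ m, inWin (B : ℤ) (0 + (k : ℤ) * (M : ℤ)) m → g m = g' m := by
    intro k hkK m hm
    have hkM : (k : ℤ) * (M : ℤ) ≤ c₀ := by
      rw [hc₀]
      exact_mod_cast Nat.mul_le_mul_right M (by omega : k ≤ K - 1)
    obtain ⟨a1, a2, a3, a4⟩ := hm
    rw [hg']
    unfold window'
    rw [if_pos]
    refine ⟨by push_cast [← hc₀]; linarith, by push_cast [← hc₀]; linarith,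
      by push_cast [← hc₀]; linarith, by push_cast [← hc₀]; linarith⟩
  -- rewrite the windowed difference
  have key : ∀ n, window B (fun m => filt L h K f m - filt L h K (window B f) m) n
      = ∑ k ∈ Finset.range K, h k * window B (convIter L k g') n := by
    intro n
    simp only [window]
    split_ifs with hcond
    · rw [step0 n]
      apply Finset.sum_congr rfl
      intro k hk
      rw [Finset.mem_range] at hk
      congr 1
      refine convIter_congr hLS (B : ℤ) g g' k 0 (hgg' k hk) n ?_
      obtain ⟨b1, b2, b3, b4⟩ := hcond
      exact ⟨by omega, by omega, by omega, by omega⟩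
    · symm
      apply Finset.sum_eq_zero
      intro k _
      rw [mul_zero]
  rw [show (window B (fun n => filt L h K f n - filt L h K (window B f) n))
      = fun n => ∑ k ∈ Finset.range K, h k * window B (convIter L k g') n from funext key]
  -- common support of the windowed terms
  set T₀ : Finset (ℤ × ℤ) := Finset.Icc ((0 : ℤ), (0 : ℤ)) ((B : ℤ) - 1, (B : ℤ) - 1) with hT₀def
  have hT₀ : ∀ k ∈ Finset.range K, ∀ n ∉ T₀, window B (convIter L k g') n = 0 := by
    intro k _ n hn
    simp only [window]
    rw [if_neg]
    rintro ⟨c1, c2, c3, c4⟩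
    apply hn
    rw [hT₀def, Finset.mem_Icc, Prod.le_def, Prod.le_def]
    exact ⟨⟨c1, c3⟩, ⟨by omega, by omega⟩⟩
  have tri := l2norm_finsum_le (Finset.range K) h
    (fun k => window B (convIter L k g')) T₀ hT₀
  -- support of g'
  have hg'supp : ∀ n, g' n ≠ 0 → (-c₀, -c₀) ≤ n ∧ n ≤ ((B : ℤ) - 1 + c₀, (B : ℤ) - 1 + c₀) := by
    intro n hn
    rw [hg'] at hn
    unfold window' at hn
    by_cases hcond : -(((K - 1) * M : ℕ) : ℤ) ≤ n.1 ∧ n.1 ≤ (B : ℤ) - 1 + ((K - 1) * M : ℕ)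
        ∧ -(((K - 1) * M : ℕ) : ℤ) ≤ n.2 ∧ n.2 ≤ (B : ℤ) - 1 + ((K - 1) * M : ℕ)
    · obtain ⟨d1, d2, d3, d4⟩ := hcond
      rw [Prod.le_def, Prod.le_def]
      exact ⟨⟨by omega, by omega⟩, ⟨by omega, by omega⟩⟩
    · rw [if_neg hcond] at hn
      exact absurd rfl hn
  have hy := young_iter hLS g' (-c₀, -c₀) ((B : ℤ) - 1 + c₀, (B : ℤ) - 1 + c₀) hg'supp
  -- per-term bound
  have hperk : ∀ k ∈ Finset.range K,
      l2norm (window B (convIter L k g')) ≤ kernelL1 L ^ k * l2norm g' := by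
    intro k _
    obtain ⟨hs, hnorm⟩ := hy k
    refine le_trans (l2norm_le_of_restrict
      (Finset.Icc (-c₀, -c₀) (((B : ℤ) - 1 + c₀, (B : ℤ) - 1 + c₀)
        + ((k * M : ℤ), (k * M : ℤ)))) ?_ ?_) hnorm
    · intro n hnn
      by_contra h0
      apply hnn
      rw [Finset.mem_Icc]
      exact hs n h0
    · intro n
      simp only [window]
      split_ifs
      · left; rfl
      · right; rfl
  calc l2norm (fun n => ∑ k ∈ Finset.range K, h k * window B (convIter L k g') n)
      ≤ ∑ k ∈ Finset.range K, |h k| * l2norm (window B (convIter L k g')) := tri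
    _ ≤ ∑ k ∈ Finset.range K, |h k| * (kernelL1 L ^ k * l2norm g') := by
        apply Finset.sum_le_sum
        intro k hk
        exact mul_le_mul_of_nonneg_left (hperk k hk) (abs_nonneg _)
    _ = (∑ k ∈ Finset.range K, |h k| * kernelL1 L ^ k) * l2norm g' := by
        rw [Finset.sum_mul]
        apply Finset.sum_congr rfl
        intro k _
        ring
end

section
/- Let n ∈ ℕ⁺, let C ∈ ℝ^{n×n} be symmetric with eigenvalues λ₁,…,λ_n and orthonormal eigenbasis, let W ∈ ℝ^{n×n} be symmetric, and let h₀,…,h_K ∈ ℝ. Suppose that for all pairs of eigenvalues (λ_i, λ_j) of C the divided difference of the frequency response ĥ(λ) = Σ_{k=0}^K h_k λ^k is bounded: | Σ_{k=0}^{K} h_k Σ_{r=1}^{k} λ_i^{k−r} λ_j^{r−1} | ≤ C₀ (this quantity equals (ĥ(λ_i) − ĥ(λ_j))/(λ_i − λ_j) when λ_i ≠ λ_j and ĥ'(λ_i) when λ_i = λ_j). Then for every x ∈ ℝⁿ, ‖ Σ_{k=0}^{K} h_k ( Σ_{r=1}^{k} C^{k−r} W C^{r−1} ) x ‖² ≤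 n · C₀² · ‖W²‖₂ · ‖x‖². -/
open Matrix
set_option synthInstance.maxHeartbeats 400000
set_option maxHeartbeats 1000000
set_option linter.unusedVariables false


/-- Euclidean norm of a vector in `ℝⁿ`. -/
noncomputable def eNorm {n : ℕ} (x : Fin n → ℝ) : ℝ := Real.sqrt (∑ i, x i ^ 2)

/-- Spectral (operator 2-) norm of a real `n × n` matrix. -/
noncomputable def specNorm {n : ℕ} (M : Matrix (Fin n) (Fin n) ℝ) : ℝ :=
  ‖Matrix.toEuclideanCLM (𝕜 := ℝ) M‖

lemma specBound {n : ℕ} (M : Matrix (Fin n) (Fin n) ℝ) (v : Fin n → ℝ) :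
    eNorm (M.mulVec v) ≤ specNorm M * eNorm v := by
  have h1 := ContinuousLinearMap.le_opNorm (Matrix.toEuclideanCLM (𝕜 := ℝ) M)
    ((WithLp.equiv 2 (Fin n → ℝ)).symm v)
  simpa [eNorm, specNorm, EuclideanSpace.norm_eq, Real.norm_eq_abs, sq_abs,
    Matrix.toLin'_apply] using h1

lemma expand {n : ℕ} {e : Fin n → (Fin n → ℝ)}
    (horth : ∀ i j, dotProduct (e i) (e j) = if i = j then 1 else 0)
    (v : Fin n → ℝ) (t : Fin n) :
    v t = ∑ j, dotProduct (e j) v * e j t := by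
  classical
  set P : Matrix (Fin n) (Fin n) ℝ := Matrix.of (fun i j => e i j) with hP
  have hPPt : P * Pᵀ = 1 := by
    ext i j
    simpa [Matrix.mul_apply, Matrix.one_apply, hP, dotProduct] using horth i j
  have hPtP : Pᵀ * P = 1 := mul_eq_one_comm.mp hPPt
  have h2 := congrFun (congrArg (fun M => M.mulVec v) hPtP) t
  simp only [Matrix.one_mulVec] at h2
  rw [← h2]
  simp only [Matrix.mulVec, Matrix.mul_apply, dotProduct, hP, Matrix.of_apply,
    Matrix.transpose_apply, Finset.sum_mul, Finset.mul_sum]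
  rw [Finset.sum_comm]
  exact Finset.sum_congr rfl fun j _ => Finset.sum_congr rfl fun s _ => by ring

lemma parseval {n : ℕ} {e : Fin n → (Fin n → ℝ)}
    (horth : ∀ i j, dotProduct (e i) (e j) = if i = j then 1 else 0)
    (v : Fin n → ℝ) :
    ∑ i, (dotProduct (e i) v) ^ 2 = ∑ t, v t ^ 2 := by
  calc ∑ i, (dotProduct (e i) v) ^ 2
      = ∑ i, ∑ t, dotProduct (e i) v * e i t * v t := by
        refine Finset.sum_congr rfl fun i _ => ?_
        rw [sq]
        nth_rewrite 2 [dotProduct]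
        rw [Finset.mul_sum]
        exact Finset.sum_congr rfl fun t _ => by ring
    _ = ∑ t, (∑ i, dotProduct (e i) v * e i t) * v t := by
        rw [Finset.sum_comm]
        exact Finset.sum_congr rfl fun t _ => by rw [Finset.sum_mul]
    _ = ∑ t, v t ^ 2 := by
        refine Finset.sum_congr rfl fun t _ => ?_
        rw [← expand horth v t, sq]

lemma pow_eig {n : ℕ} {C : Matrix (Fin n) (Fin n) ℝ} {lam : Fin n → ℝ}
    {e : Fin n → (Fin n → ℝ)} (heig : ∀ i, C.mulVec (e i) = lam i • e i)
    (m : ℕ) (i : Fin n) : (C ^ m).mulVec (e i) = (lam i ^ m) • e i := by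
  induction m with
  | zero => simp
  | succ m ih =>
    rw [pow_succ', ← Matrix.mulVec_mulVec, ih, Matrix.mulVec_smul, heig i,
      smul_smul, ← pow_succ]

lemma sym_dot {n : ℕ} {C : Matrix (Fin n) (Fin n) ℝ} (hC : C.IsSymm)
    {lam : Fin n → ℝ} {e : Fin n → (Fin n → ℝ)}
    (heig : ∀ i, C.mulVec (e i) = lam i • e i)
    (m : ℕ) (i : Fin n) (v : Fin n → ℝ) :
    dotProduct (e i) ((C ^ m).mulVec v)
      = lam i ^ m * dotProduct (e i) v := by
  rw [Matrix.dotProduct_mulVec, ← Matrix.mulVec_transpose, (hC.pow m).eq, pow_eig heig,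
    smul_dotProduct, smul_eq_mul]

lemma symW_dot {n : ℕ} {W : Matrix (Fin n) (Fin n) ℝ} (hW : W.IsSymm)
    (u v : Fin n → ℝ) :
    dotProduct u (W.mulVec v) = dotProduct (W.mulVec u) v := by
  rw [Matrix.dotProduct_mulVec, ← Matrix.mulVec_transpose, hW.eq]


lemma sum_mulVec' {n : ℕ} {ι : Type*} (s : Finset ι) (A : ι → Matrix (Fin n) (Fin n) ℝ)
    (v : Fin n → ℝ) : (∑ k ∈ s, A k).mulVec v = ∑ k ∈ s, (A k).mulVec v := by
  ext t
  simp only [Matrix.mulVec, dotProduct, Matrix.sum_apply, Finset.sum_apply,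
    Finset.sum_mul]
  rw [Finset.sum_comm]

lemma dot_sum' {n : ℕ} {ι : Type*} (s : Finset ι) (u : Fin n → ℝ) (v : ι → Fin n → ℝ) :
    dotProduct u (∑ k ∈ s, v k) = ∑ k ∈ s, dotProduct u (v k) := by
  simp only [dotProduct, Finset.sum_apply, Finset.mul_sum]
  rw [Finset.sum_comm]

/-- **Deterministic core of Proposition 2.**
Let `C` be symmetric with eigenvalues `λᵢ` and orthonormal eigenbasis `eᵢ`, `W` symmetric,
and suppose the divided differences of the frequency response `ĥ(λ) = ∑_k h_k λᵏ` satisfy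
`|∑_{k=0}^K h_k ∑_{r=1}^k λᵢ^{k-r} λⱼ^{r-1}| ≤ C₀` for all eigenvalue pairs. Then
`‖∑_k h_k (∑_{r=1}^k C^{k-r} W C^{r-1}) x‖² ≤ n C₀² ‖W²‖₂ ‖x‖²`. -/
theorem first_order_perturbation_bound (n : ℕ)
    (C : Matrix (Fin n) (Fin n) ℝ) (hC : C.IsSymm)
    (lam : Fin n → ℝ) (e : Fin n → (Fin n → ℝ))
    (heig : ∀ i, C.mulVec (e i) = lam i • e i)
    (horth : ∀ i j, dotProduct (e i) (e j) = if i = j then 1 else 0)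
    (W : Matrix (Fin n) (Fin n) ℝ) (hW : W.IsSymm)
    (K : ℕ) (h : ℕ → ℝ) (C₀ : ℝ) (hC₀ : 0 ≤ C₀)
    (hdiv : ∀ i j : Fin n,
      |∑ k ∈ Finset.range (K + 1),
          h k * ∑ r ∈ Finset.Icc 1 k, lam i ^ (k - r) * lam j ^ (r - 1)| ≤ C₀)
    (x : Fin n → ℝ) :
    eNorm ((∑ k ∈ Finset.range (K + 1),
        h k • ∑ r ∈ Finset.Icc 1 k, C ^ (k - r) * W * C ^ (r - 1)).mulVec x) ^ 2
      ≤ (n : ℝ) * C₀ ^ 2 * specNorm (W ^ 2) * eNorm x ^ 2 := by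
  classical
  set y : Fin n → ℝ := (∑ k ∈ Finset.range (K + 1),
      h k • ∑ r ∈ Finset.Icc 1 k, C ^ (k - r) * W * C ^ (r - 1)).mulVec x with hy
  set c : Fin n → ℝ := fun j => dotProduct (e j) x with hc
  set w : Fin n → Fin n → ℝ := fun i j => dotProduct (W.mulVec (e i)) (e j) with hw
  set g : Fin n → Fin n → ℝ := fun i j => ∑ k ∈ Finset.range (K + 1),
      h k * ∑ r ∈ Finset.Icc 1 k, lam i ^ (k - r) * lam j ^ (r - 1) with hg
  -- key expansion of each term
  have key : ∀ (a b : ℕ) (i : Fin n),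
      dotProduct (e i) ((C ^ a * W * C ^ b).mulVec x)
        = lam i ^ a * ∑ j, lam j ^ b * (c j * w i j) := by
    intro a b i
    rw [← Matrix.mulVec_mulVec, ← Matrix.mulVec_mulVec, sym_dot hC heig a i,
      symW_dot hW]
    congr 1
    calc dotProduct (W.mulVec (e i)) ((C ^ b).mulVec x)
        = ∑ t, W.mulVec (e i) t * ∑ j, (lam j ^ b * c j) * e j t := by
          refine Finset.sum_congr rfl fun t _ => ?_
          congr 1
          rw [expand horth ((C ^ b).mulVec x) t]
          exact Finset.sum_congr rfl fun j _ => by rw [sym_dot hC heig b j x]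
      _ = ∑ j, lam j ^ b * (c j * w i j) := by
          simp only [Finset.mul_sum]
          rw [Finset.sum_comm]
          refine Finset.sum_congr rfl fun j _ => ?_
          rw [hw]
          simp only [dotProduct, Finset.mul_sum]
          exact Finset.sum_congr rfl fun t _ => by ring
  -- coefficient form of e i ⬝ y
  have dform : ∀ i, dotProduct (e i) y
      = ∑ j, (g i j * c j) * w i j := by
    intro i
    have e1 : dotProduct (e i) y
        = ∑ k ∈ Finset.range (K + 1), h k * ∑ r ∈ Finset.Icc 1 k,
            lam i ^ (k - r) * ∑ j, lam j ^ (r - 1) * (c j * w i j) := by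
      rw [hy, sum_mulVec', dot_sum']
      refine Finset.sum_congr rfl fun k _ => ?_
      rw [Matrix.smul_mulVec, dotProduct_smul, smul_eq_mul,
        sum_mulVec', dot_sum']
      congr 1
      exact Finset.sum_congr rfl fun r _ => key (k - r) (r - 1) i
    rw [e1]
    have A : ∀ S, S = ∑ k ∈ Finset.range (K + 1), ∑ r ∈ Finset.Icc 1 k, ∑ j : Fin n,
        h k * (lam i ^ (k - r) * (lam j ^ (r - 1) * (c j * w i j))) → True := fun _ _ => trivial
    calc ∑ k ∈ Finset.range (K + 1), h k * ∑ r ∈ Finset.Icc 1 k,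
            lam i ^ (k - r) * ∑ j, lam j ^ (r - 1) * (c j * w i j)
        = ∑ k ∈ Finset.range (K + 1), ∑ r ∈ Finset.Icc 1 k, ∑ j : Fin n,
            h k * (lam i ^ (k - r) * (lam j ^ (r - 1) * (c j * w i j))) := by
          simp only [Finset.mul_sum]
      _ = ∑ j : Fin n, ∑ k ∈ Finset.range (K + 1), ∑ r ∈ Finset.Icc 1 k,
            h k * (lam i ^ (k - r) * (lam j ^ (r - 1) * (c j * w i j))) := by
          rw [Finset.sum_comm]
          exact Finset.sum_congr rfl fun k _ => Finset.sum_comm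
      _ = ∑ j, (g i j * c j) * w i j := by
          refine Finset.sum_congr rfl fun j _ => ?_
          rw [hg]
          simp only [Finset.sum_mul, Finset.mul_sum]
          exact Finset.sum_congr rfl fun k _ => Finset.sum_congr rfl fun r _ => by ring
  -- eNorm of e i is 1
  have hei : ∀ i, (∑ t, e i t ^ 2) = 1 := by
    intro i
    have := horth i i
    simpa [dotProduct, sq] using this
  have hspec0 : 0 ≤ specNorm (W ^ 2) := norm_nonneg _
  -- bound on sum of w i j ^ 2
  have wbound : ∀ i, ∑ j, w i j ^ 2 ≤ specNorm (W ^ 2) := by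
    intro i
    have e2 : ∑ j, w i j ^ 2 = ∑ t, (W.mulVec (e i)) t ^ 2 := by
      rw [← parseval horth (W.mulVec (e i))]
      exact Finset.sum_congr rfl fun j _ => by rw [hw, dotProduct_comm]
    have e3 : ∑ t, (W.mulVec (e i)) t ^ 2
        = dotProduct (e i) ((W ^ 2).mulVec (e i)) := by
      rw [sq, ← Matrix.mulVec_mulVec, symW_dot hW]
      simp [dotProduct, sq]
    rw [e2, e3]
    set u : Fin n → ℝ := (W ^ 2).mulVec (e i) with hu
    have cs : (dotProduct (e i) u) ^ 2 ≤ (∑ t, e i t ^ 2) * (∑ t, u t ^ 2) := by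
      rw [dotProduct]
      exact Finset.sum_mul_sq_le_sq_mul_sq _ _ _
    rw [hei i, one_mul] at cs
    have hu2 : ∑ t, u t ^ 2 ≤ specNorm (W ^ 2) ^ 2 := by
      have b1 : eNorm u ≤ specNorm (W ^ 2) * eNorm (e i) := specBound _ _
      have b2 : eNorm (e i) = 1 := by rw [eNorm, hei i, Real.sqrt_one]
      rw [b2, mul_one] at b1
      have b3 : eNorm u ^ 2 ≤ specNorm (W ^ 2) ^ 2 :=
        pow_le_pow_left₀ (Real.sqrt_nonneg _) b1 2
      rwa [eNorm, Real.sq_sqrt (Finset.sum_nonneg fun t _ => sq_nonneg _)] at b3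
    have cs2 : (dotProduct (e i) u) ^ 2 ≤ specNorm (W ^ 2) ^ 2 := le_trans cs hu2
    calc dotProduct (e i) u ≤ |dotProduct (e i) u| := le_abs_self _
      _ = Real.sqrt ((dotProduct (e i) u) ^ 2) := (Real.sqrt_sq_eq_abs _).symm
      _ ≤ Real.sqrt (specNorm (W ^ 2) ^ 2) := Real.sqrt_le_sqrt cs2
      _ = specNorm (W ^ 2) := Real.sqrt_sq hspec0
  -- bound on sum of coefficients
  have cbound : ∀ i, ∑ j, (g i j * c j) ^ 2 ≤ C₀ ^ 2 * ∑ j, c j ^ 2 := by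
    intro i
    rw [Finset.mul_sum]
    refine Finset.sum_le_sum fun j _ => ?_
    rw [mul_pow]
    refine mul_le_mul_of_nonneg_right ?_ (sq_nonneg _)
    calc g i j ^ 2 = |g i j| ^ 2 := (sq_abs _).symm
      _ ≤ C₀ ^ 2 := pow_le_pow_left₀ (abs_nonneg _) (hdiv i j) 2
  -- per-index bound
  have dbound : ∀ i, (dotProduct (e i) y) ^ 2
      ≤ (C₀ ^ 2 * ∑ j, c j ^ 2) * specNorm (W ^ 2) := by
    intro i
    rw [dform i]
    calc (∑ j, (g i j * c j) * w i j) ^ 2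
        ≤ (∑ j, (g i j * c j) ^ 2) * (∑ j, w i j ^ 2) :=
          Finset.sum_mul_sq_le_sq_mul_sq _ _ _
      _ ≤ (C₀ ^ 2 * ∑ j, c j ^ 2) * specNorm (W ^ 2) := by
          refine mul_le_mul (cbound i) (wbound i)
            (Finset.sum_nonneg fun j _ => sq_nonneg _)
            (mul_nonneg (sq_nonneg _) (Finset.sum_nonneg fun j _ => sq_nonneg _))
  -- assemble
  have hxsq : ∑ j, c j ^ 2 = eNorm x ^ 2 := by
    rw [eNorm, Real.sq_sqrt (Finset.sum_nonneg fun t _ => sq_nonneg _)]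
    exact parseval horth x
  have final : eNorm y ^ 2 = ∑ i, (dotProduct (e i) y) ^ 2 := by
    rw [eNorm, Real.sq_sqrt (Finset.sum_nonneg fun t _ => sq_nonneg _)]
    exact (parseval horth y).symm
  rw [final]
  calc ∑ i, (dotProduct (e i) y) ^ 2
      ≤ ∑ _i : Fin n, (C₀ ^ 2 * ∑ j, c j ^ 2) * specNorm (W ^ 2) :=
        Finset.sum_le_sum fun i _ => dbound i
    _ = (n : ℝ) * ((C₀ ^ 2 * ∑ j, c j ^ 2) * specNorm (W ^ 2)) := by
        rw [Finset.sum_const, Finset.card_univ, Fintype.card_fin, nsmul_eq_mul]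
    _ = (n : ℝ) * C₀ ^ 2 * specNorm (W ^ 2) * eNorm x ^ 2 := by
        rw [hxsq]; ring
end
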